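/- Consider the plant x(k+1) = A_G x(k) + B_G u(k) with A_G ∈ ℝ^{n×n}, B_G ∈ ℝ^{n×m}, and the polytopic state constraint set X = {x ∈ ℝⁿ : |H_iᵀ x| ≤ h_i for i = 1,…,n_X} with h_i ≥ 0. Let the controller be given in loop-transformed LFT form by matrices Ñ_ux ∈ ℝ^{m×n}, Ñ_uz ∈ ℝ^{m×p}, Ñ_vx ∈ ℝ^{p×n}, Ñ_vz ∈ ℝ^{p×p}, a nonlinearity φ̃ : ℝᵖ → ℝᵖ with φ̃(0) = 0, and a map z : ℝⁿ → ℝᵖ satisfying z(x) = φ̃(Ñ_vx x + Ñ_vz z(x)) for all x and z(0) = 0; the control is u(x) = Ñ_ux x + Ñ_uz z(x) and the closed-loop map is F(x) = A_G x + B_G u(x). Suppose there are vectors v̲ ≤ 0 ≤ v̄ in ℝᵖ such that: (a) for every x ∈ X, the vector v(x) := Ñ_vx x + Ñ_vz z(x) satisfies v̲ ≤ v(x) ≤ v̄; (b) for every v with v̲ ≤ v ≤ v̄ and every i, |φ̃(v)_i| ≤ |v_i|. Suppose further there exist a symmetric positive definite P ∈ ℝ^{n×n} and λ ∈ ℝᵖ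 with λ_i > 0 for all i such that, with Λ = diag(λ), R_V = [[I_n, 0], [Ñ_ux, Ñ_uz]], R_φ = [[Ñ_vx, Ñ_vz], [0, I_p]]: (c) R_Vᵀ [[A_GᵀPA_G − P, A_GᵀPB_G], [B_GᵀPA_G, B_GᵀPB_G]] R_V + R_φᵀ · diag(Λ, −Λ) · R_φ is negative definite; (d) for each i = 1,…,n_X, the block matrix [[h_i², H_iᵀ], [H_i, P]] is positive semidefinite. Then E(P) ⊆ X, and for every x₀ ∈ E(P) the trajectory x(0) = x₀, x(k+1) = F(x(k)) satisfies x(k) ∈ E(P) for all k ≥ 0 and x(k) → 0 as k → ∞. -/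

import Mathlib

open Matrix Filter

section Helpers

lemma dot_self_nonneg' {ι : Type*} [Fintype ι] (w : ι → ℝ) : 0 ≤ w ⬝ᵥ w :=
  Finset.sum_nonneg fun i _ => mul_self_nonneg (w i)

lemma sq_le_dot_self {ι : Type*} [Fintype ι] (w : ι → ℝ) (i : ι) : (w i) ^ 2 ≤ w ⬝ᵥ w := by
  have := Finset.single_le_sum (f := fun j => w j * w j)
    (fun j _ => mul_self_nonneg (w j)) (Finset.mem_univ i)
  simpa [sq, dotProduct] using this

lemma quad_cont' {ι : Type*} [Fintype ι] (M : Matrix ι ι ℝ) :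
    Continuous fun w : ι → ℝ => w ⬝ᵥ M.mulVec w := by
  simp only [dotProduct, Matrix.mulVec]
  exact continuous_finset_sum _ fun i _ => (continuous_apply i).mul
    (continuous_finset_sum _ fun j _ => continuous_const.mul (continuous_apply j))

lemma dot_self_cont' {ι : Type*} [Fintype ι] :
    Continuous fun w : ι → ℝ => w ⬝ᵥ w := by
  simp only [dotProduct]
  exact continuous_finset_sum _ fun i _ => (continuous_apply i).mul (continuous_apply i)

lemma quad_smul' {ι : Type*} [Fintype ι] (M : Matrix ι ι ℝ) (c : ℝ) (w : ι → ℝ) :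
    (c • w) ⬝ᵥ M.mulVec (c • w) = c ^ 2 * (w ⬝ᵥ M.mulVec w) := by
  rw [smul_dotProduct, Matrix.mulVec_smul, dotProduct_smul, smul_smul, smul_eq_mul, sq]

lemma dot_smul_self' {ι : Type*} [Fintype ι] (c : ℝ) (w : ι → ℝ) :
    (c • w) ⬝ᵥ (c • w) = c ^ 2 * (w ⬝ᵥ w) := by
  rw [smul_dotProduct, dotProduct_smul, smul_smul, smul_eq_mul, sq]

/-- A negative definite quadratic form admits a uniform negative bound on the sphere. -/
lemma quad_neg_bound {ι : Type*} [Fintype ι] [DecidableEq ι] (M : Matrix ι ι ℝ)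
    (hM : ∀ w : ι → ℝ, w ≠ 0 → w ⬝ᵥ M.mulVec w < 0) :
    ∃ ε > 0, ∀ w : ι → ℝ, w ⬝ᵥ M.mulVec w ≤ -ε * (w ⬝ᵥ w) := by
  cases isEmpty_or_nonempty ι with
  | inl hι =>
      refine ⟨1, one_pos, fun w => ?_⟩
      have : w = 0 := Subsingleton.elim _ _
      simp [this]
  | inr hι =>
      set S : Set (ι → ℝ) := {w | w ⬝ᵥ w = 1} with hSdef
      have hclosed : IsClosed S := isClosed_eq dot_self_cont' continuous_const
      have hbdd : Bornology.IsBounded S := by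
        refine (Metric.isBounded_iff_subset_closedBall 0).2 ⟨1, fun w hw => ?_⟩
        have hw1 : w ⬝ᵥ w = 1 := hw
        simp only [Metric.mem_closedBall, dist_zero_right]
        refine (pi_norm_le_iff_of_nonneg zero_le_one).2 fun i => ?_
        have hsum : ∑ x, w x * w x = 1 := hw1
        have h1 : w i * w i ≤ 1 := by
          have := Finset.single_le_sum (f := fun j => w j * w j)
            (fun j _ => mul_self_nonneg (w j)) (Finset.mem_univ i)
          rw [hsum] at this
          exact this
        simpa [Real.norm_eq_abs] using abs_le_one_iff_mul_self_le_one.2 h1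
      have hcomp : IsCompact S := Metric.isCompact_of_isClosed_isBounded hclosed hbdd
      obtain ⟨i⟩ := hι
      have hSne : S.Nonempty := by
        refine ⟨Pi.single i 1, ?_⟩
        show Pi.single i 1 ⬝ᵥ Pi.single i 1 = 1
        simp [dotProduct, Pi.single_apply, Finset.sum_ite_eq']
      obtain ⟨w₀, hw₀S, hmax⟩ := hcomp.exists_isMaxOn hSne (quad_cont' M).continuousOn
      have hw₀ne : w₀ ≠ 0 := by
        intro hcon
        have h0 : w₀ ⬝ᵥ w₀ = 1 := hw₀S
        rw [hcon] at h0
        simp at h0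
      set ε : ℝ := -(w₀ ⬝ᵥ M.mulVec w₀) with hε
      have hεpos : 0 < ε := by simpa [hε] using hM w₀ hw₀ne
      refine ⟨ε, hεpos, fun w => ?_⟩
      rcases eq_or_ne w 0 with rfl | hwne
      · simp
      · have hdpos : 0 < w ⬝ᵥ w := lt_of_le_of_ne (dot_self_nonneg' w)
          (fun hcon => hwne (dotProduct_self_eq_zero.1 hcon.symm))
        set t : ℝ := Real.sqrt (w ⬝ᵥ w) with ht
        have htpos : 0 < t := Real.sqrt_pos.2 hdpos
        have ht2 : t ^ 2 = w ⬝ᵥ w := Real.sq_sqrt hdpos.le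
        have hmem : (t⁻¹ • w) ∈ S := by
          show (t⁻¹ • w) ⬝ᵥ (t⁻¹ • w) = 1
          rw [dot_smul_self', ← ht2]
          field_simp
        have hle : (t⁻¹ • w) ⬝ᵥ M.mulVec (t⁻¹ • w) ≤ -ε := by
          simpa [hε] using hmax hmem
        rw [quad_smul'] at hle
        have ht2pos : (0:ℝ) < t ^ 2 := by positivity
        have := mul_le_mul_of_nonneg_right hle ht2pos.le
        calc w ⬝ᵥ M.mulVec w = (t⁻¹ ^ 2 * (w ⬝ᵥ M.mulVec w)) * t ^ 2 := by
              field_simp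
          _ ≤ -ε * t ^ 2 := this
          _ = -ε * (w ⬝ᵥ w) := by rw [ht2]

/-- Crude upper bound for a quadratic form. -/
lemma quad_upper_bound {ι : Type*} [Fintype ι] (M : Matrix ι ι ℝ) :
    ∃ C > 0, ∀ x : ι → ℝ, x ⬝ᵥ M.mulVec x ≤ C * (x ⬝ᵥ x) := by
  refine ⟨(∑ i, ∑ j, |M i j|) + 1, by positivity, fun x => ?_⟩
  have habs : ∀ i j : ι, |x i| * |x j| ≤ x ⬝ᵥ x := by
    intro i j
    have h1 := sq_le_dot_self x i
    have h2 := sq_le_dot_self x j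
    nlinarith [sq_nonneg (|x i| - |x j|), sq_abs (x i), sq_abs (x j)]
  have hterm : ∀ i j : ι, x i * (M i j * x j) ≤ |M i j| * (x ⬝ᵥ x) := by
    intro i j
    calc x i * (M i j * x j) ≤ |x i * (M i j * x j)| := le_abs_self _
      _ = |M i j| * (|x i| * |x j|) := by rw [abs_mul, abs_mul]; ring
      _ ≤ |M i j| * (x ⬝ᵥ x) := mul_le_mul_of_nonneg_left (habs i j) (abs_nonneg _)
  calc x ⬝ᵥ M.mulVec x = ∑ i, ∑ j, x i * (M i j * x j) := by
        simp [dotProduct, Matrix.mulVec, Finset.mul_sum]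
    _ ≤ ∑ i, ∑ j, |M i j| * (x ⬝ᵥ x) :=
        Finset.sum_le_sum fun i _ => Finset.sum_le_sum fun j _ => hterm i j
    _ = (∑ i, ∑ j, |M i j|) * (x ⬝ᵥ x) := by rw [Finset.sum_mul]; simp [Finset.sum_mul]
    _ ≤ ((∑ i, ∑ j, |M i j|) + 1) * (x ⬝ᵥ x) := by
        have := dot_self_nonneg' x; nlinarith

lemma dot_transpose' {k l : Type*} [Fintype k] [Fintype l] (A : Matrix l k ℝ)
    (w : k → ℝ) (y : l → ℝ) : w ⬝ᵥ Aᵀ *ᵥ y = (A *ᵥ w) ⬝ᵥ y := by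
  rw [dotProduct_mulVec, vecMul_transpose]

lemma key_id {n m p : ℕ} (A : Matrix (Fin n) (Fin n) ℝ) (B : Matrix (Fin n) (Fin m) ℝ)
    (Nux : Matrix (Fin m) (Fin n) ℝ) (Nuz : Matrix (Fin m) (Fin p) ℝ)
    (Nvx : Matrix (Fin p) (Fin n) ℝ) (Nvz : Matrix (Fin p) (Fin p) ℝ)
    (P : Matrix (Fin n) (Fin n) ℝ) (lam : Fin p → ℝ) (x : Fin n → ℝ) (zx : Fin p → ℝ) :
    (x ⊕ᵥ zx) ⬝ᵥ (((Matrix.fromBlocks (1 : Matrix (Fin n) (Fin n) ℝ) 0 Nux Nuz)ᵀ *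
        (Matrix.fromBlocks (Aᵀ * P * A - P) (Aᵀ * P * B) (Bᵀ * P * A) (Bᵀ * P * B)) *
        (Matrix.fromBlocks (1 : Matrix (Fin n) (Fin n) ℝ) 0 Nux Nuz) +
      (Matrix.fromBlocks Nvx Nvz 0 (1 : Matrix (Fin p) (Fin p) ℝ))ᵀ *
        (Matrix.fromBlocks (Matrix.diagonal lam) 0 0 (-(Matrix.diagonal lam))) *
        (Matrix.fromBlocks Nvx Nvz 0 (1 : Matrix (Fin p) (Fin p) ℝ))) *ᵥ (x ⊕ᵥ zx))
    = (A *ᵥ x + B *ᵥ (Nux *ᵥ x + Nuz *ᵥ zx)) ⬝ᵥ P *ᵥ (A *ᵥ x + B *ᵥ (Nux *ᵥ x + Nuz *ᵥ zx))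
      - x ⬝ᵥ P *ᵥ x
      + (Nvx *ᵥ x + Nvz *ᵥ zx) ⬝ᵥ (Matrix.diagonal lam) *ᵥ (Nvx *ᵥ x + Nvz *ᵥ zx)
      - zx ⬝ᵥ (Matrix.diagonal lam) *ᵥ zx := by
  simp only [Matrix.add_mulVec, dotProduct_add, ← Matrix.mulVec_mulVec, dot_transpose',
    Matrix.fromBlocks_mulVec, Sum.elim_comp_inl, Sum.elim_comp_inr,
    Matrix.one_mulVec, Matrix.zero_mulVec, Matrix.neg_mulVec, Matrix.sub_mulVec,
    add_zero, zero_add, sumElim_dotProduct_sumElim,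
    dotProduct_sub, dotProduct_neg, add_dotProduct, Matrix.mulVec_add]
  ring

lemma sector_ineq {p : ℕ} (lam : Fin p → ℝ) (hlam : ∀ i, 0 < lam i)
    (zx vv : Fin p → ℝ) (hzv : ∀ i, |zx i| ≤ |vv i|) :
    zx ⬝ᵥ (Matrix.diagonal lam) *ᵥ zx ≤ vv ⬝ᵥ (Matrix.diagonal lam) *ᵥ vv := by
  simp only [dotProduct, Matrix.mulVec_diagonal]
  refine Finset.sum_le_sum fun i _ => ?_
  have h1 : zx i * zx i ≤ vv i * vv i := by
    have := mul_self_le_mul_self (abs_nonneg (zx i)) (hzv i)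
    simpa [abs_mul_abs_self] using this
  nlinarith [(hlam i).le]

lemma containment' {n : ℕ} (Hv : Fin n → ℝ) (hval : ℝ) (hnn : 0 ≤ hval)
    (P : Matrix (Fin n) (Fin n) ℝ)
    (hpsd : (Matrix.fromBlocks (!![hval ^ 2]) (Matrix.of fun (_ : Fin 1) j => Hv j)
      (Matrix.of fun j (_ : Fin 1) => Hv j) P).PosSemidef)
    (x : Fin n → ℝ) (hx : x ⬝ᵥ P.mulVec x ≤ 1) :
    |Hv ⬝ᵥ x| ≤ hval := by
  have key : ∀ t : ℝ, 0 ≤ hval ^ 2 * (t * t) + (2 * (Hv ⬝ᵥ x)) * t + x ⬝ᵥ P.mulVec x := by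
    intro t
    have h0 := hpsd.dotProduct_mulVec_nonneg ((fun _ : Fin 1 => t) ⊕ᵥ x)
    simp only [RCLike.re_to_real, star_trivial, Matrix.fromBlocks_mulVec,
      Sum.elim_comp_inl, Sum.elim_comp_inr, sumElim_dotProduct_sumElim,
      dotProduct_add] at h0
    have e1 : (fun _ : Fin 1 => t) ⬝ᵥ (!![hval ^ 2] *ᵥ fun _ => t) = hval ^ 2 * (t * t) := by
      simp [dotProduct, Matrix.mulVec, Fin.sum_univ_one]; ring
    have e2 : (fun _ : Fin 1 => t) ⬝ᵥ ((Matrix.of fun (_ : Fin 1) j => Hv j) *ᵥ x)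
        = t * (Hv ⬝ᵥ x) := by
      simp [dotProduct, Matrix.mulVec, Fin.sum_univ_one]
    have e3 : x ⬝ᵥ ((Matrix.of fun j (_ : Fin 1) => Hv j) *ᵥ fun _ => t)
        = (Hv ⬝ᵥ x) * t := by
      simp [dotProduct, Matrix.mulVec, Fin.sum_univ_one, Finset.sum_mul]
      exact Finset.sum_congr rfl fun j _ => by ring
    rw [e1, e2, e3] at h0
    linarith
  have hdisc := discrim_le_zero key
  rw [discrim] at hdisc
  have h3 : (Hv ⬝ᵥ x) ^ 2 ≤ hval ^ 2 := by nlinarith [sq_nonneg hval]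
  exact abs_le_of_sq_le_sq h3 hnn

end Helpers

/-- Closed-loop stability and safety for the loop-transformed NN controller:
the normalized sector [−1, 1], the Lyapunov LMI with diag(Λ, −Λ), and the
set-containment LMIs certify that E(P) ⊆ X is an invariant inner-approximation
of the region of attraction. -/
theorem stmt_15 (n m p nX : ℕ)
    (A_G : Matrix (Fin n) (Fin n) ℝ) (B_G : Matrix (Fin n) (Fin m) ℝ)
    (H : Fin nX → Fin n → ℝ) (h : Fin nX → ℝ) (hh : ∀ i, 0 ≤ h i)
    (Nux : Matrix (Fin m) (Fin n) ℝ) (Nuz : Matrix (Fin m) (Fin p) ℝ)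
    (Nvx : Matrix (Fin p) (Fin n) ℝ) (Nvz : Matrix (Fin p) (Fin p) ℝ)
    (φ : (Fin p → ℝ) → (Fin p → ℝ)) (hφ0 : φ 0 = 0)
    (z : (Fin n → ℝ) → (Fin p → ℝ))
    (hz : ∀ x, z x = φ (Nvx.mulVec x + Nvz.mulVec (z x))) (hz0 : z 0 = 0)
    (u : (Fin n → ℝ) → (Fin m → ℝ))
    (hu : ∀ x, u x = Nux.mulVec x + Nuz.mulVec (z x))
    (F : (Fin n → ℝ) → (Fin n → ℝ))
    (hF : ∀ x, F x = A_G.mulVec x + B_G.mulVec (u x))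
    (vlo vhi : Fin p → ℝ)
    (hvlo : ∀ i, vlo i ≤ 0) (hvhi : ∀ i, 0 ≤ vhi i)
    -- (a) activation input bounds hold on the state constraint set X
    (ha : ∀ x : Fin n → ℝ, (∀ i, |H i ⬝ᵥ x| ≤ h i) →
      ∀ i, vlo i ≤ (Nvx.mulVec x + Nvz.mulVec (z x)) i ∧
           (Nvx.mulVec x + Nvz.mulVec (z x)) i ≤ vhi i)
    -- (b) normalized local sector [−1, 1] for the transformed nonlinearity
    (hb : ∀ v : Fin p → ℝ, (∀ i, vlo i ≤ v i ∧ v i ≤ vhi i) →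
      ∀ i, |φ v i| ≤ |v i|)
    (P : Matrix (Fin n) (Fin n) ℝ) (hP : P.PosDef)
    (lam : Fin p → ℝ) (hlam : ∀ i, 0 < lam i)
    -- (c) the loop-transformed Lyapunov LMI is negative definite
    (hc : ∀ w : Fin n ⊕ Fin p → ℝ, w ≠ 0 →
      w ⬝ᵥ ((Matrix.fromBlocks (1 : Matrix (Fin n) (Fin n) ℝ) 0 Nux Nuz)ᵀ *
              (Matrix.fromBlocks (A_Gᵀ * P * A_G - P) (A_Gᵀ * P * B_G)
                (B_Gᵀ * P * A_G) (B_Gᵀ * P * B_G)) *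
              (Matrix.fromBlocks (1 : Matrix (Fin n) (Fin n) ℝ) 0 Nux Nuz) +
            (Matrix.fromBlocks Nvx Nvz 0 (1 : Matrix (Fin p) (Fin p) ℝ))ᵀ *
              (Matrix.fromBlocks (Matrix.diagonal lam) 0 0 (-(Matrix.diagonal lam))) *
              (Matrix.fromBlocks Nvx Nvz 0 (1 : Matrix (Fin p) (Fin p) ℝ))).mulVec w < 0)
    -- (d) the set-containment LMIs
    (hd : ∀ i, (Matrix.fromBlocks (!![(h i) ^ 2])
        (Matrix.of fun (_ : Fin 1) j => H i j)
        (Matrix.of fun j (_ : Fin 1) => H i j) P).PosSemidef) :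
    -- conclusion: E(P) ⊆ X, invariance of E(P), and convergence to 0
    (∀ x : Fin n → ℝ, x ⬝ᵥ P.mulVec x ≤ 1 → ∀ i, |H i ⬝ᵥ x| ≤ h i) ∧
    ∀ x₀ : Fin n → ℝ, x₀ ⬝ᵥ P.mulVec x₀ ≤ 1 →
      (∀ k : ℕ, (F^[k] x₀) ⬝ᵥ P.mulVec (F^[k] x₀) ≤ 1) ∧
      Tendsto (fun k : ℕ => F^[k] x₀) atTop (nhds 0) := by
  -- E(P) ⊆ X
  have part1 : ∀ x : Fin n → ℝ, x ⬝ᵥ P.mulVec x ≤ 1 → ∀ i, |H i ⬝ᵥ x| ≤ h i :=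
    fun x hx i => containment' (H i) (h i) (hh i) P (hd i) x hx
  -- spectral bounds
  obtain ⟨ε, hεpos, hεb⟩ := quad_neg_bound _ hc
  obtain ⟨a, hapos, hab⟩ := quad_neg_bound (-P) (by
    intro w hw
    have := hP.dotProduct_mulVec_pos hw
    simp only [star_trivial] at this
    rw [Matrix.neg_mulVec, dotProduct_neg]
    linarith)
  have hlow : ∀ x : Fin n → ℝ, a * (x ⬝ᵥ x) ≤ x ⬝ᵥ P.mulVec x := by
    intro x
    have := hab x
    rw [Matrix.neg_mulVec, dotProduct_neg] at this
    linarith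
  obtain ⟨C, hCpos, hCb⟩ := quad_upper_bound P
  have hV0 : ∀ x : Fin n → ℝ, 0 ≤ x ⬝ᵥ P.mulVec x := fun x =>
    le_trans (mul_nonneg hapos.le (dot_self_nonneg' x)) (hlow x)
  -- the decrease rate
  set ρ : ℝ := min ε C with hρ
  have hρpos : 0 < ρ := lt_min hεpos hCpos
  have hρC : ρ ≤ C := min_le_right _ _
  set r : ℝ := 1 - ρ / C with hr
  have hr0 : 0 ≤ r := by
    rw [hr]
    have : ρ / C ≤ 1 := (div_le_one hCpos).2 hρC
    linarith
  have hr1 : r < 1 := by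
    rw [hr]
    have : 0 < ρ / C := div_pos hρpos hCpos
    linarith
  -- one-step decrease on E(P)
  have hdec : ∀ x : Fin n → ℝ, x ⬝ᵥ P.mulVec x ≤ 1 →
      (F x) ⬝ᵥ P.mulVec (F x) ≤ r * (x ⬝ᵥ P.mulVec x) := by
    intro x hx
    have hX := part1 x hx
    set zx := z x with hzx
    set vv := Nvx.mulVec x + Nvz.mulVec zx with hvv
    have hzv : ∀ i, |zx i| ≤ |vv i| := by
      intro i
      have h2 := hb _ (ha x hX) i
      rw [← hz x] at h2
      exact h2
    have hsec := sector_ineq lam hlam zx vv hzv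
    have hkey := key_id A_G B_G Nux Nuz Nvx Nvz P lam x zx
    have hεw := hεb (x ⊕ᵥ zx)
    rw [hkey] at hεw
    have hww : (x ⊕ᵥ zx) ⬝ᵥ (x ⊕ᵥ zx) = x ⬝ᵥ x + zx ⬝ᵥ zx :=
      sumElim_dotProduct_sumElim _ _ _ _
    rw [hww] at hεw
    have hFx : F x = A_G.mulVec x + B_G.mulVec (Nux.mulVec x + Nuz.mulVec zx) := by
      rw [hF x, hu x]
    rw [hFx]
    have hzz := dot_self_nonneg' zx
    have hxx := dot_self_nonneg' x
    have hstep : (A_G.mulVec x + B_G.mulVec (Nux.mulVec x + Nuz.mulVec zx)) ⬝ᵥ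
        P.mulVec (A_G.mulVec x + B_G.mulVec (Nux.mulVec x + Nuz.mulVec zx))
        ≤ x ⬝ᵥ P.mulVec x - ε * (x ⬝ᵥ x) := by
      have hvvlam : vv ⬝ᵥ (Matrix.diagonal lam) *ᵥ vv - zx ⬝ᵥ (Matrix.diagonal lam) *ᵥ zx ≥ 0 := by
        linarith
      nlinarith [hεw]
    have hup : ρ * (x ⬝ᵥ P.mulVec x) ≤ ρ * (C * (x ⬝ᵥ x)) :=
      mul_le_mul_of_nonneg_left (hCb x) hρpos.le
    have hρε : ρ * (x ⬝ᵥ x) ≤ ε * (x ⬝ᵥ x) :=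
      mul_le_mul_of_nonneg_right (min_le_left _ _) hxx
    have : (ρ / C) * (x ⬝ᵥ P.mulVec x) ≤ ε * (x ⬝ᵥ x) := by
      rw [div_mul_eq_mul_div, div_le_iff₀ hCpos]
      calc ρ * (x ⬝ᵥ P.mulVec x) ≤ ρ * (C * (x ⬝ᵥ x)) := hup
        _ = (ρ * (x ⬝ᵥ x)) * C := by ring
        _ ≤ (ε * (x ⬝ᵥ x)) * C := mul_le_mul_of_nonneg_right hρε hCpos.le
    rw [hr]
    nlinarith [hstep]
  -- assemble
  refine ⟨part1, fun x₀ hx₀ => ?_⟩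
  have hiter : ∀ k : ℕ, (F^[k] x₀) ⬝ᵥ P.mulVec (F^[k] x₀) ≤ r ^ k * (x₀ ⬝ᵥ P.mulVec x₀) ∧
      (F^[k] x₀) ⬝ᵥ P.mulVec (F^[k] x₀) ≤ 1 := by
    intro k
    induction k with
    | zero => simp [hx₀]
    | succ k ih =>
        obtain ⟨ih1, ih2⟩ := ih
        rw [Function.iterate_succ_apply']
        have hstep := hdec _ ih2
        constructor
        · calc (F (F^[k] x₀)) ⬝ᵥ P.mulVec (F (F^[k] x₀))
              ≤ r * ((F^[k] x₀) ⬝ᵥ P.mulVec (F^[k] x₀)) := hstep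
            _ ≤ r * (r ^ k * (x₀ ⬝ᵥ P.mulVec x₀)) := mul_le_mul_of_nonneg_left ih1 hr0
            _ = r ^ (k + 1) * (x₀ ⬝ᵥ P.mulVec x₀) := by ring
        · calc (F (F^[k] x₀)) ⬝ᵥ P.mulVec (F (F^[k] x₀))
              ≤ r * ((F^[k] x₀) ⬝ᵥ P.mulVec (F^[k] x₀)) := hstep
            _ ≤ 1 * 1 := by
                apply mul_le_mul hr1.le ih2 (hV0 _) zero_le_one
            _ = 1 := one_mul 1
  refine ⟨fun k => (hiter k).2, ?_⟩
  -- convergence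
  rw [tendsto_pi_nhds]
  intro i
  have hV₀ : 0 ≤ x₀ ⬝ᵥ P.mulVec x₀ := hV0 x₀
  set c : ℝ := (x₀ ⬝ᵥ P.mulVec x₀) / a with hc'
  have hc0 : 0 ≤ c := div_nonneg hV₀ hapos.le
  have hle : ∀ k : ℕ, |(F^[k] x₀) i| ≤ Real.sqrt c * Real.sqrt r ^ k := by
    intro k
    have h1 : (F^[k] x₀) ⬝ᵥ (F^[k] x₀) ≤ c * r ^ k := by
      have h2 := hlow (F^[k] x₀)
      have h3 := (hiter k).1
      rw [hc', div_mul_eq_mul_div, le_div_iff₀ hapos]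
      nlinarith
    have h4 : ((F^[k] x₀) i) ^ 2 ≤ (Real.sqrt c * Real.sqrt r ^ k) ^ 2 := by
      have h5 : (Real.sqrt c * Real.sqrt r ^ k) ^ 2 = c * r ^ k := by
        rw [mul_pow, ← pow_mul, mul_comm k 2, pow_mul, Real.sq_sqrt hc0, Real.sq_sqrt hr0]
      rw [h5]
      exact le_trans (sq_le_dot_self _ i) h1
    exact abs_le_of_sq_le_sq h4 (by positivity)
  have hsr : Real.sqrt r < 1 := by
    calc Real.sqrt r < Real.sqrt 1 := Real.sqrt_lt_sqrt hr0 hr1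
      _ = 1 := Real.sqrt_one
  have hg : Tendsto (fun k : ℕ => Real.sqrt c * Real.sqrt r ^ k) atTop (nhds 0) := by
    have := (tendsto_pow_atTop_nhds_zero_of_lt_one (Real.sqrt_nonneg r) hsr).const_mul
      (Real.sqrt c)
    simpa using this
  have habs : Tendsto (fun k : ℕ => |(F^[k] x₀) i|) atTop (nhds 0) :=
    squeeze_zero (fun k => abs_nonneg _) hle hg
  have := (tendsto_zero_iff_abs_tendsto_zero (fun k : ℕ => (F^[k] x₀) i)).2 habs
  simpa using this
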